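/- Let (𝓧, d) be a real tree and let μ be the one-dimensional Hausdorff measure on 𝓧. Define δ_t(A) = μ(conv(A)) for finite A ⊆ 𝓧, where conv(A) = ⋃_{a,b ∈ A} [a, b] is the union of the geodesic segments between pairs of points of A. Then (𝓧, δ_t) is a diversity: δ_t(A) ≥ 0 with δ_t(A) = 0 if and only if |A| ≤ 1, and δ_t(A ∪ C) ≤ δ_t(A ∪ B) + δ_t(B ∪ C) for all finite A, B, C ⊆ 𝓧 with B ≠ ∅. -/

import Mathlib

open scoped Classical
open MeasureTheory

noncomputable section

/-- A diversity: axioms (D1) and (D2). -/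
def IsDiversity {X : Type*} (δ : Finset X → ℝ) : Prop :=
  (∀ A, 0 ≤ δ A) ∧ (∀ A, δ A = 0 ↔ A.card ≤ 1) ∧
    ∀ A B C : Finset X, B ≠ ∅ → δ (A ∪ C) ≤ δ (A ∪ B) + δ (B ∪ C)

/-- `s` is a geodesic segment joining `x` and `y`: the image of an isometric
parametrisation `c : [0, d(x,y)] → 𝓧` with `c 0 = x` and `c (d(x,y)) = y`. -/
def IsGeodesicSegment {T : Type*} [MetricSpace T] (x y : T) (s : Set T) : Prop :=
  ∃ c : ℝ → T, c 0 = x ∧ c (dist x y) = y ∧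
    (∀ u ∈ Set.Icc (0 : ℝ) (dist x y), ∀ v ∈ Set.Icc (0 : ℝ) (dist x y),
      dist (c u) (c v) = |u - v|) ∧
    s = c '' Set.Icc (0 : ℝ) (dist x y)

/-- A real tree: each pair of points is joined by a unique geodesic segment, and
if `[y,x] ∩ [x,z] = {x}` then `[y,x] ∪ [x,z] = [y,z]`. -/
def IsRealTree (T : Type*) [MetricSpace T] : Prop :=
  (∀ x y : T, ∃! s : Set T, IsGeodesicSegment x y s) ∧
  (∀ x y z : T, ∀ syx sxz syz : Set T,
    IsGeodesicSegment y x syx → IsGeodesicSegment x z sxz → IsGeodesicSegment y z syz →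
    syx ∩ sxz = {x} → syx ∪ sxz = syz)

/-- The real-tree diversity: `δ_t A = μ (conv A)` where `conv A` is the union of the
geodesic segments `[a, b]` for `a, b ∈ A` and `μ` is the one-dimensional Hausdorff
measure. -/
noncomputable def treeDiv {T : Type*} [MetricSpace T] [MeasurableSpace T] [BorelSpace T]
    (seg : T → T → Set T) : Finset T → ℝ :=
  fun A => (μH[1] (⋃ a ∈ A, ⋃ b ∈ A, seg a b)).toReal

section Aux

variable {T : Type*} [MetricSpace T]

/-- The one-dimensional Hausdorff measure of a geodesic segment is the distance
between its endpoints. -/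
lemma hausdorff_geodesic [MeasurableSpace T] [BorelSpace T] {x y : T} {s : Set T}
    (h : IsGeodesicSegment x y s) : μH[1] s = ENNReal.ofReal (dist x y) := by
  obtain ⟨c, h0, hr, hiso, him⟩ := h
  set r := dist x y with hrdef
  let e : Set.Icc (0 : ℝ) r → T := fun u => c u
  have he : Isometry e := by
    apply Isometry.of_dist_eq
    intro u v
    show dist (c u) (c v) = _
    rw [hiso u u.2 v v.2, Subtype.dist_eq, Real.dist_eq]
  have hrange : Set.range e = c '' Set.Icc (0 : ℝ) r := by
    have : e = c ∘ (Subtype.val : Set.Icc (0 : ℝ) r → ℝ) := rfl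
    rw [this, Set.range_comp, Subtype.range_coe]
  have h1 : μH[1] (e '' Set.univ) = μH[1] (Set.univ : Set (Set.Icc (0 : ℝ) r)) :=
    he.hausdorffMeasure_image (Or.inl zero_le_one) _
  have hval : Isometry (Subtype.val : Set.Icc (0 : ℝ) r → ℝ) := isometry_subtype_coe
  have h2 : μH[1] ((Subtype.val : Set.Icc (0 : ℝ) r → ℝ) '' Set.univ)
      = μH[1] (Set.univ : Set (Set.Icc (0 : ℝ) r)) :=
    hval.hausdorffMeasure_image (Or.inl zero_le_one) _
  have h3 : (Subtype.val : Set.Icc (0 : ℝ) r → ℝ) '' Set.univ = Set.Icc (0 : ℝ) r := by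
    rw [Set.image_univ, Subtype.range_coe]
  rw [him, ← hrange, ← Set.image_univ, h1, ← h2, h3, hausdorffMeasure_real,
    Real.volume_Icc, sub_zero]

/-- Two geodesic parametrisations starting at the same point that agree at time `t`
agree on `[0, t]`. -/
lemma geodesic_param_agree (htree : IsRealTree T) {a : T} {c1 c2 : ℝ → T} {r1 r2 t : ℝ}
    (h10 : c1 0 = a) (h20 : c2 0 = a)
    (h1iso : ∀ u ∈ Set.Icc (0 : ℝ) r1, ∀ v ∈ Set.Icc (0 : ℝ) r1,
      dist (c1 u) (c1 v) = |u - v|)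
    (h2iso : ∀ u ∈ Set.Icc (0 : ℝ) r2, ∀ v ∈ Set.Icc (0 : ℝ) r2,
      dist (c2 u) (c2 v) = |u - v|)
    (ht1 : t ∈ Set.Icc (0 : ℝ) r1) (ht2 : t ∈ Set.Icc (0 : ℝ) r2)
    (heq : c1 t = c2 t) : ∀ u ∈ Set.Icc (0 : ℝ) t, c1 u = c2 u := by
  set p := c1 t with hp
  have hsub1 : Set.Icc (0 : ℝ) t ⊆ Set.Icc (0 : ℝ) r1 :=
    Set.Icc_subset_Icc le_rfl ht1.2
  have hsub2 : Set.Icc (0 : ℝ) t ⊆ Set.Icc (0 : ℝ) r2 :=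
    Set.Icc_subset_Icc le_rfl ht2.2
  have h01 : (0 : ℝ) ∈ Set.Icc (0 : ℝ) r1 := ⟨le_rfl, ht1.1.trans ht1.2⟩
  have h02 : (0 : ℝ) ∈ Set.Icc (0 : ℝ) r2 := ⟨le_rfl, ht2.1.trans ht2.2⟩
  have hdap : dist a p = t := by
    rw [← h10, hp, h1iso 0 h01 t ht1, zero_sub, abs_neg, abs_of_nonneg ht1.1]
  have hg1 : IsGeodesicSegment a p (c1 '' Set.Icc (0 : ℝ) t) := by
    refine ⟨c1, h10, ?_, ?_, ?_⟩
    · rw [hdap]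
    · rw [hdap]; exact fun u hu v hv => h1iso u (hsub1 hu) v (hsub1 hv)
    · rw [hdap]
  have hg2 : IsGeodesicSegment a p (c2 '' Set.Icc (0 : ℝ) t) := by
    refine ⟨c2, h20, ?_, ?_, ?_⟩
    · rw [hdap, ← heq]
    · rw [hdap]; exact fun u hu v hv => h2iso u (hsub2 hu) v (hsub2 hv)
    · rw [hdap]
  have him : c1 '' Set.Icc (0 : ℝ) t = c2 '' Set.Icc (0 : ℝ) t :=
    (htree.1 a p).unique hg1 hg2
  intro u hu
  have : c1 u ∈ c2 '' Set.Icc (0 : ℝ) t := him ▸ Set.mem_image_of_mem _ hu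
  obtain ⟨v, hv, hvu⟩ := this
  have hdu : dist a (c1 u) = u := by
    rw [← h10, h1iso 0 h01 u (hsub1 hu), zero_sub, abs_neg, abs_of_nonneg hu.1]
  have hdv : dist a (c2 v) = v := by
    rw [← h20, h2iso 0 h02 v (hsub2 hv), zero_sub, abs_neg, abs_of_nonneg hv.1]
  have huv : u = v := by rw [← hdu, ← hvu, hdv]
  rw [← hvu, huv]

/-- Tripod lemma in a real tree: `[a, c] ⊆ [a, b] ∪ [b, c]`. -/
lemma geodesic_tripod (htree : IsRealTree T) (seg : T → T → Set T)
    (hseg : ∀ x y : T, IsGeodesicSegment x y (seg x y)) (a b c : T) :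
    seg a c ⊆ seg a b ∪ seg b c := by
  obtain ⟨c1, h10, h1r, h1iso, h1im⟩ := hseg a b
  obtain ⟨c2, h20, h2r, h2iso, h2im⟩ := hseg a c
  set rab := dist a b with hrab
  set rac := dist a c with hrac
  set S : Set ℝ := Set.Icc 0 (min rab rac) ∩ {t | c1 t = c2 t} with hSdef
  have hS0 : (0 : ℝ) ∈ S :=
    ⟨⟨le_rfl, le_min dist_nonneg dist_nonneg⟩, by simp only [Set.mem_setOf_eq, h10, h20]⟩
  have hSbdd : BddAbove S := ⟨min rab rac, fun t ht => ht.1.2⟩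
  -- S is closed
  have hc1l : ContinuousOn c1 (Set.Icc (0 : ℝ) rab) := by
    refine (LipschitzOnWith.of_dist_le_mul (K := 1) fun u hu v hv => ?_).continuousOn
    rw [h1iso u hu v hv, NNReal.coe_one, one_mul, Real.dist_eq]
  have hc2l : ContinuousOn c2 (Set.Icc (0 : ℝ) rac) := by
    refine (LipschitzOnWith.of_dist_le_mul (K := 1) fun u hu v hv => ?_).continuousOn
    rw [h2iso u hu v hv, NNReal.coe_one, one_mul, Real.dist_eq]
  have hsubab : Set.Icc (0 : ℝ) (min rab rac) ⊆ Set.Icc 0 rab :=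
    Set.Icc_subset_Icc le_rfl (min_le_left _ _)
  have hsubac : Set.Icc (0 : ℝ) (min rab rac) ⊆ Set.Icc 0 rac :=
    Set.Icc_subset_Icc le_rfl (min_le_right _ _)
  have hScl : IsClosed S := by
    have hf : ContinuousOn (fun t => dist (c1 t) (c2 t)) (Set.Icc (0 : ℝ) (min rab rac)) :=
      by have := continuous_dist.comp_continuousOn (ContinuousOn.prodMk (hc1l.mono hsubab) (hc2l.mono hsubac)); exact this
    have : S = Set.Icc (0 : ℝ) (min rab rac) ∩
        (fun t => dist (c1 t) (c2 t)) ⁻¹' {0} := by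
      ext t
      simp only [hSdef, Set.mem_inter_iff, Set.mem_setOf_eq, Set.mem_preimage,
        Set.mem_singleton_iff, dist_eq_zero]
    rw [this]
    exact hf.preimage_isClosed_of_isClosed isClosed_Icc isClosed_singleton
  set t0 := sSup S with ht0def
  have ht0S : t0 ∈ S := hScl.csSup_mem ⟨0, hS0⟩ hSbdd
  have ht0ab : t0 ∈ Set.Icc (0 : ℝ) rab := ⟨ht0S.1.1, ht0S.1.2.trans (min_le_left _ _)⟩
  have ht0ac : t0 ∈ Set.Icc (0 : ℝ) rac := ⟨ht0S.1.1, ht0S.1.2.trans (min_le_right _ _)⟩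
  set m := c1 t0 with hm
  have hmeq : c1 t0 = c2 t0 := ht0S.2
  -- agreement on [0, t0]
  have hagree : ∀ u ∈ Set.Icc (0 : ℝ) t0, c1 u = c2 u :=
    geodesic_param_agree htree h10 h20 h1iso h2iso ht0ab ht0ac hmeq
  -- the tail of c1 is a geodesic segment from b to m
  have hrabmem : rab ∈ Set.Icc (0 : ℝ) rab := ⟨dist_nonneg, le_rfl⟩
  have hracmem : rac ∈ Set.Icc (0 : ℝ) rac := ⟨dist_nonneg, le_rfl⟩
  have hdbm : dist b m = rab - t0 := by
    rw [dist_comm, hm, ← h1r, h1iso t0 ht0ab rab hrabmem,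
      abs_of_nonpos (sub_nonpos.mpr ht0ab.2), neg_sub]
  have hg_bm : IsGeodesicSegment b m (c1 '' Set.Icc t0 rab) := by
    refine ⟨fun u => c1 (rab - u), by simp [h1r], ?_, ?_, ?_⟩
    · rw [hdbm]; simp [hm]
    · rw [hdbm]
      intro u hu v hv
      have hu' : rab - u ∈ Set.Icc (0 : ℝ) rab :=
        ⟨by linarith [hu.2, ht0ab.1], by linarith [hu.1]⟩
      have hv' : rab - v ∈ Set.Icc (0 : ℝ) rab :=
        ⟨by linarith [hv.2, ht0ab.1], by linarith [hv.1]⟩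
      rw [h1iso _ hu' _ hv']
      rw [show rab - u - (rab - v) = -(u - v) by ring, abs_neg]
    · rw [hdbm, ← Set.image_image c1 (fun u => rab - u), Set.image_const_sub_Icc]
      norm_num
  -- the tail of c2 is a geodesic segment from m to c
  have hdmc : dist m c = rac - t0 := by
    rw [hm, hmeq, ← h2r, h2iso t0 ht0ac rac hracmem,
      abs_of_nonpos (sub_nonpos.mpr ht0ac.2), neg_sub]
  have hg_mc : IsGeodesicSegment m c (c2 '' Set.Icc t0 rac) := by
    refine ⟨fun u => c2 (t0 + u), by simp [hm, hmeq], ?_, ?_, ?_⟩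
    · rw [hdmc]; show c2 (t0 + (rac - t0)) = c
      rw [show t0 + (rac - t0) = rac by ring, h2r]
    · rw [hdmc]
      intro u hu v hv
      have hu' : t0 + u ∈ Set.Icc (0 : ℝ) rac :=
        ⟨by linarith [hu.1, ht0ac.1], by linarith [hu.2]⟩
      have hv' : t0 + v ∈ Set.Icc (0 : ℝ) rac :=
        ⟨by linarith [hv.1, ht0ac.1], by linarith [hv.2]⟩
      rw [h2iso _ hu' _ hv']
      rw [show t0 + u - (t0 + v) = u - v by ring]
    · rw [hdmc, ← Set.image_image c2 (fun u => t0 + u), Set.image_const_add_Icc]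
      norm_num
  -- the tails meet only at m
  have hint : (c1 '' Set.Icc t0 rab) ∩ (c2 '' Set.Icc t0 rac) = {m} := by
    apply Set.Subset.antisymm
    · rintro p ⟨⟨u, hu, hup⟩, ⟨v, hv, hvp⟩⟩
      have hu' : u ∈ Set.Icc (0 : ℝ) rab := ⟨ht0ab.1.trans hu.1, hu.2⟩
      have hv' : v ∈ Set.Icc (0 : ℝ) rac := ⟨ht0ac.1.trans hv.1, hv.2⟩
      have hdu : dist a p = u := by
        rw [← hup, ← h10, h1iso 0 ⟨le_rfl, dist_nonneg⟩ u hu', zero_sub, abs_neg,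
          abs_of_nonneg hu'.1]
      have hdv : dist a p = v := by
        rw [← hvp, ← h20, h2iso 0 ⟨le_rfl, dist_nonneg⟩ v hv', zero_sub, abs_neg,
          abs_of_nonneg hv'.1]
      have huv : u = v := by rw [← hdu, hdv]
      have huS : u ∈ S := by
        refine ⟨⟨hu'.1, le_min hu'.2 (huv ▸ hv'.2)⟩, ?_⟩
        show c1 u = c2 u
        rw [hup, huv, hvp]
      have hle : u ≤ t0 := le_csSup hSbdd huS
      have : u = t0 := le_antisymm hle hu.1
      simp only [Set.mem_singleton_iff, ← hup, this, hm]
    · intro p hp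
      rw [Set.mem_singleton_iff] at hp
      subst hp
      exact ⟨⟨t0, ⟨le_rfl, ht0ab.2⟩, rfl⟩, ⟨t0, ⟨le_rfl, ht0ac.2⟩, hmeq.symm⟩⟩
  -- the tree axiom: the union of the tails is [b, c]
  have hbc : (c1 '' Set.Icc t0 rab) ∪ (c2 '' Set.Icc t0 rac) = seg b c :=
    htree.2 m b c _ _ _ hg_bm hg_mc (hseg b c) hint
  -- conclude
  rw [h2im]
  rintro p ⟨u, hu, hup⟩
  by_cases hut : u ≤ t0
  · left
    rw [h1im]
    exact ⟨u, ⟨hu.1, hut.trans ht0ab.2⟩, by rw [hagree u ⟨hu.1, hut⟩, hup]⟩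
  · right
    rw [← hbc]
    exact Or.inr ⟨u, ⟨(not_le.mp hut).le, hu.2⟩, hup⟩

end Aux

/-- for a real tree `(𝓧, d)` with geodesic segments `seg x y = [x, y]`,
the function `δ_t(A) = μ(conv A)` is a diversity. -/
theorem treeDiv_is_diversity {T : Type*} [MetricSpace T] [MeasurableSpace T] [BorelSpace T]
    (htree : IsRealTree T)
    (seg : T → T → Set T) (hseg : ∀ x y : T, IsGeodesicSegment x y (seg x y)) :
    IsDiversity (treeDiv seg) := by
  have hbound : ∀ A : Finset T, μH[1] (⋃ a ∈ A, ⋃ b ∈ A, seg a b)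
      ≤ ∑ a ∈ A, ∑ b ∈ A, ENNReal.ofReal (dist a b) := by
    intro A
    refine (measure_biUnion_finset_le _ _).trans (Finset.sum_le_sum fun a _ => ?_)
    refine (measure_biUnion_finset_le _ _).trans (Finset.sum_le_sum fun b _ => ?_)
    rw [hausdorff_geodesic (hseg a b)]
  have hfin : ∀ A : Finset T, μH[1] (⋃ a ∈ A, ⋃ b ∈ A, seg a b) ≠ ⊤ := by
    intro A
    refine ne_top_of_le_ne_top ?_ (hbound A)
    exact (ENNReal.sum_ne_top.mpr fun a _ =>
      ENNReal.sum_ne_top.mpr fun b _ => ENNReal.ofReal_ne_top)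
  refine ⟨fun A => ENNReal.toReal_nonneg, fun A => ?_, fun A B C hB => ?_⟩
  · constructor
    · intro h0
      by_contra hcard
      push_neg at hcard
      obtain ⟨a, ha, b, hb, hab⟩ := Finset.one_lt_card.mp hcard
      have hsub : seg a b ⊆ ⋃ x ∈ A, ⋃ y ∈ A, seg x y := fun p hp =>
        Set.mem_biUnion ha (Set.mem_biUnion hb hp)
      have hle : ENNReal.ofReal (dist a b) ≤ μH[1] (⋃ x ∈ A, ⋃ y ∈ A, seg x y) := by
        rw [← hausdorff_geodesic (hseg a b)]
        exact measure_mono hsub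
      have hzero : μH[1] (⋃ x ∈ A, ⋃ y ∈ A, seg x y) = 0 := by
        rcases ENNReal.toReal_eq_zero_iff _ |>.mp h0 with h | h
        · exact h
        · exact absurd h (hfin A)
      rw [hzero, le_zero_iff, ENNReal.ofReal_eq_zero] at hle
      exact hab (dist_le_zero.mp hle ▸ rfl)
    · intro hcard
      have hall : ∀ a ∈ A, ∀ b ∈ A, a = b := Finset.card_le_one.mp hcard
      have hzero : μH[1] (⋃ a ∈ A, ⋃ b ∈ A, seg a b) = 0 := by
        refine le_antisymm ((hbound A).trans_eq ?_) zero_le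
        refine Finset.sum_eq_zero fun a ha => Finset.sum_eq_zero fun b hb => ?_
        rw [hall a ha b hb, dist_self, ENNReal.ofReal_zero]
      simp [treeDiv, hzero]
  · obtain ⟨b0, hb0⟩ := Finset.nonempty_iff_ne_empty.mpr hB
    have hmem : ∀ (s : Finset T) (x y : T), x ∈ s → y ∈ s → ∀ p ∈ seg x y,
        p ∈ ⋃ a ∈ s, ⋃ b ∈ s, seg a b := fun s x y hx hy p hp =>
      Set.mem_biUnion hx (Set.mem_biUnion hy hp)
    have hsub : (⋃ a ∈ A ∪ C, ⋃ b ∈ A ∪ C, seg a b) ⊆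
        (⋃ a ∈ A ∪ B, ⋃ b ∈ A ∪ B, seg a b) ∪ (⋃ a ∈ B ∪ C, ⋃ b ∈ B ∪ C, seg a b) := by
      intro p hp
      simp only [Set.mem_iUnion, exists_prop] at hp
      obtain ⟨x, hx, y, hy, hp⟩ := hp
      rw [Finset.mem_union] at hx hy
      rcases hx with hx | hx <;> rcases hy with hy | hy
      · exact Or.inl (hmem _ x y (Finset.mem_union_left _ hx) (Finset.mem_union_left _ hy) p hp)
      · rcases geodesic_tripod htree seg hseg x b0 y hp with h | h
        · exact Or.inl (hmem _ x b0 (Finset.mem_union_left _ hx)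
            (Finset.mem_union_right _ hb0) p h)
        · exact Or.inr (hmem _ b0 y (Finset.mem_union_left _ hb0)
            (Finset.mem_union_right _ hy) p h)
      · rcases geodesic_tripod htree seg hseg x b0 y hp with h | h
        · exact Or.inr (hmem _ x b0 (Finset.mem_union_right _ hx)
            (Finset.mem_union_left _ hb0) p h)
        · exact Or.inl (hmem _ b0 y (Finset.mem_union_right _ hb0)
            (Finset.mem_union_left _ hy) p h)
      · exact Or.inr (hmem _ x y (Finset.mem_union_right _ hx)
          (Finset.mem_union_right _ hy) p hp)
    have hle : μH[1] (⋃ a ∈ A ∪ C, ⋃ b ∈ A ∪ C, seg a b)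
        ≤ μH[1] (⋃ a ∈ A ∪ B, ⋃ b ∈ A ∪ B, seg a b)
          + μH[1] (⋃ a ∈ B ∪ C, ⋃ b ∈ B ∪ C, seg a b) :=
      (measure_mono hsub).trans (measure_union_le _ _)
    have hadd : ((μH[1] (⋃ a ∈ A ∪ B, ⋃ b ∈ A ∪ B, seg a b))
        + μH[1] (⋃ a ∈ B ∪ C, ⋃ b ∈ B ∪ C, seg a b)) ≠ ⊤ :=
      ENNReal.add_ne_top.mpr ⟨hfin _, hfin _⟩
    calc treeDiv seg (A ∪ C)
        ≤ ((μH[1] (⋃ a ∈ A ∪ B, ⋃ b ∈ A ∪ B, seg a b))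
          + μH[1] (⋃ a ∈ B ∪ C, ⋃ b ∈ B ∪ C, seg a b)).toReal :=
          ENNReal.toReal_mono hadd hle
      _ = treeDiv seg (A ∪ B) + treeDiv seg (B ∪ C) :=
          ENNReal.toReal_add (hfin _) (hfin _)

end
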